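/- Let a > b ≥ 1 be natural numbers with gcd(a, b) = 1, and define f(t) = a − (t mod a) ∈ {1, …, a} and g(t) = b − (t mod b) ∈ {1, …, b}. Then the set {t ∈ {0, 1, …, ab − 1} : f(t) = g(t) + 1} has exactly b elements, and these solutions form a single contiguous block modulo the hyper-period ab = lcm(a,b): there exists t₀ ∈ ℕ such that for all t ∈ ℕ, f(t) = g(t) + 1 if and only if t ≡ t₀ + j (mod ab) for some j ∈ {0, 1, …, b − 1}. Along this block the pairs (f(t), g(t)) take the consecutive values (b+1, b), (b, b−1), …, (2, 1). -/
import Mathlib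


/-- for cyclic countdowns `f(t) = a − (t mod a)` and
`g(t) = b − (t mod b)` with `a > b ≥ 1` coprime, the gap-1 window
`f(t) = g(t) + 1` occurs for exactly `b` of the times `t ∈ {0,…,ab−1}`, these
times form a single contiguous block modulo the hyper-period `ab = lcm(a,b)`,
and along the block the pairs `(f,g)` take the consecutive values
`(b+1, b), (b, b−1), …, (2, 1)`. -/
theorem gap_one_window_block (a b : ℕ) (hba : b < a) (hb : 1 ≤ b)
    (hgcd : Nat.gcd a b = 1) :
    ((Finset.range (a * b)).filter fun t => a - t % a = (b - t % b) + 1).card = b ∧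
    ∃ t₀ : ℕ,
      (∀ t : ℕ, (a - t % a = (b - t % b) + 1 ↔
        ∃ j : ℕ, j < b ∧ t ≡ t₀ + j [MOD a * b])) ∧
      (∀ j : ℕ, j < b →
        a - (t₀ + j) % a = b + 1 - j ∧ b - (t₀ + j) % b = b - j) := by
  have hco : Nat.Coprime a b := hgcd
  have ha : 0 < a := by omega
  have hab : 0 < a * b := by positivity
  obtain ⟨t₀, ht0a, ht0b⟩ := Nat.chineseRemainder hco (a - b - 1) 0
  have hmod : ∀ j, j < b → (t₀ + j) % a = a - b - 1 + j ∧ (t₀ + j) % b = j := by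
    intro j hj
    constructor
    · have h1 : t₀ + j ≡ (a - b - 1) + j [MOD a] := ht0a.add_right j
      have h2 : (t₀ + j) % a = ((a - b - 1) + j) % a := h1
      rw [h2, Nat.mod_eq_of_lt (by omega)]
    · have h1 : t₀ + j ≡ 0 + j [MOD b] := ht0b.add_right j
      have h2 : (t₀ + j) % b = (0 + j) % b := h1
      rw [h2, Nat.zero_add, Nat.mod_eq_of_lt hj]
  have key : ∀ t : ℕ, (a - t % a = (b - t % b) + 1 ↔
      ∃ j : ℕ, j < b ∧ t ≡ t₀ + j [MOD a * b]) := by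
    intro t
    have hta : t % a < a := Nat.mod_lt _ ha
    have htb : t % b < b := Nat.mod_lt _ hb
    constructor
    · intro h
      refine ⟨t % b, htb, ?_⟩
      rw [← Nat.modEq_and_modEq_iff_modEq_mul hco]
      obtain ⟨h1, h2⟩ := hmod (t % b) htb
      constructor
      · show t % a = (t₀ + t % b) % a
        rw [h1]; omega
      · show t % b = (t₀ + t % b) % b
        rw [h2]
    · rintro ⟨j, hj, hmodeq⟩
      rw [← Nat.modEq_and_modEq_iff_modEq_mul hco] at hmodeq
      obtain ⟨e1, e2⟩ := hmodeq
      obtain ⟨h1, h2⟩ := hmod j hj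
      have e1' : t % a = (t₀ + j) % a := e1
      have e2' : t % b = (t₀ + j) % b := e2
      rw [h1] at e1'; rw [h2] at e2'
      omega
  refine ⟨?_, t₀, key, ?_⟩
  · have himg : ((Finset.range (a * b)).filter
        fun t => a - t % a = (b - t % b) + 1) =
        Finset.image (fun j => (t₀ + j) % (a * b)) (Finset.range b) := by
      ext t
      simp only [Finset.mem_filter, Finset.mem_range, Finset.mem_image]
      constructor
      · rintro ⟨hlt, hcond⟩
        obtain ⟨j, hj, hmeq⟩ := (key t).mp hcond
        refine ⟨j, hj, ?_⟩
        have : t % (a * b) = (t₀ + j) % (a * b) := hmeq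
        rw [← this, Nat.mod_eq_of_lt hlt]
      · rintro ⟨j, hj, rfl⟩
        refine ⟨Nat.mod_lt _ hab, ?_⟩
        apply (key _).mpr
        refine ⟨j, hj, ?_⟩
        show (t₀ + j) % (a * b) % (a * b) = (t₀ + j) % (a * b)
        exact (Nat.mod_mod_of_dvd _ dvd_rfl)
    rw [himg, Finset.card_image_of_injOn, Finset.card_range]
    intro j1 h1 j2 h2 heq
    simp only [Finset.mem_coe, Finset.mem_range] at h1 h2
    have hb1 : (t₀ + j1) % (a * b) % b = j1 := by
      rw [Nat.mod_mod_of_dvd _ ⟨a, Nat.mul_comm a b⟩, (hmod j1 h1).2]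
    have hb2 : (t₀ + j2) % (a * b) % b = j2 := by
      rw [Nat.mod_mod_of_dvd _ ⟨a, Nat.mul_comm a b⟩, (hmod j2 h2).2]
    simp only at heq
    rw [← hb1, ← hb2, heq]
  · intro j hj
    obtain ⟨h1, h2⟩ := hmod j hj
    rw [h1, h2]
    omega
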